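/- Let A be a finite nonempty set, X the simplex in ℝ^A, g a continuous field of symmetric positive-definite matrices on X, v : X → ℝ^A continuous, and for each y ∈ X let V(y) be the g(y)-projection of g(y)⁻¹ v(y) onto TC_X(y). Suppose f is continuously differentiable on an open set containing X with ∇f(y) = v(y) for all y ∈ X (a potential game). Then along every solution x(t) = x(0) + ∫₀ᵗ V(x(s)) ds, the function t ↦ f(x(t)) is nondecreasing, it is strictly increasing at times t where V(x(t)) ≠ 0, and dist(x(t), {y ∈ X : V(y) = 0}) → 0 as t → ∞. -/

import Mathlib

open Matrix Filter

noncomputable section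

/-- The tangent cone `TC_X(x)` of the simplex at `x`. -/
def tcone {A : Type*} [Fintype A] (x : A → ℝ) : Set (A → ℝ) :=
  {z | (∑ α, z α) = 0 ∧ ∀ α, x α = 0 → 0 ≤ z α}

/-- The quadratic form `wᵀ G w = ‖w‖_G²` associated to a matrix `G`. -/
def qform {A : Type*} [Fintype A] (G : Matrix A A ℝ) (w : A → ℝ) : ℝ :=
  w ⬝ᵥ G.mulVec w

/-- `V` is the `G`-projection of `w` onto `C`. -/
def IsGProj {A : Type*} [Fintype A] (G : Matrix A A ℝ) (C : Set (A → ℝ))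
    (w V : A → ℝ) : Prop :=
  V ∈ C ∧ ∀ z ∈ C, qform G (w - V) ≤ qform G (w - z)

set_option linter.unusedSectionVars false
set_option linter.unusedVariables false

namespace Stmt6Aux

variable {A : Type*} [Fintype A] [DecidableEq A]

def bform (G : Matrix A A ℝ) (a b : A → ℝ) : ℝ := a ⬝ᵥ G.mulVec b

lemma bform_comm {G : Matrix A A ℝ} (hG : G.IsHermitian) (a b : A → ℝ) :
    bform G a b = bform G b a := by
  have hGt : Gᵀ = G := by
    have := hG.eq
    simpa [Matrix.conjTranspose_eq_transpose_of_trivial] using hG.eq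
  unfold bform
  rw [Matrix.dotProduct_mulVec, ← Matrix.mulVec_transpose, hGt, dotProduct_comm]

lemma qform_sub {G : Matrix A A ℝ} (hG : G.IsHermitian) (a b : A → ℝ) :
    qform G (a - b) = qform G a - 2 * bform G a b + qform G b := by
  have h := bform_comm hG a b
  unfold qform bform at *
  simp only [Matrix.mulVec_sub, sub_dotProduct, dotProduct_sub]
  linarith [h]

lemma qform_nonneg {G : Matrix A A ℝ} (hG : G.PosDef) (a : A → ℝ) : 0 ≤ qform G a := by
  have := hG.posSemidef.dotProduct_mulVec_nonneg a
  simpa [qform] using this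

lemma qform_pos {G : Matrix A A ℝ} (hG : G.PosDef) {a : A → ℝ} (ha : a ≠ 0) :
    0 < qform G a := by
  have := hG.dotProduct_mulVec_pos ha
  simpa [qform] using this

lemma qform_smul (G : Matrix A A ℝ) (c : ℝ) (a : A → ℝ) :
    qform G (c • a) = c ^ 2 * qform G a := by
  unfold qform
  rw [Matrix.mulVec_smul, smul_dotProduct, dotProduct_smul,
    smul_eq_mul, smul_eq_mul]
  ring


lemma zero_mem_tcone (y : A → ℝ) : (0 : A → ℝ) ∈ tcone y := by
  constructor <;> simp [tcone]

lemma smul_mem_tcone {y z : A → ℝ} {c : ℝ} (hc : 0 ≤ c) (hz : z ∈ tcone y) :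
    c • z ∈ tcone y := by
  obtain ⟨h1, h2⟩ := hz
  refine ⟨?_, fun α hα => ?_⟩
  · simp [← Finset.mul_sum, h1]
  · exact mul_nonneg hc (h2 α hα)

lemma convex_tcone (y : A → ℝ) : Convex ℝ (tcone y) := by
  intro a ha b hb p q hp hq hpq
  obtain ⟨ha1, ha2⟩ := ha; obtain ⟨hb1, hb2⟩ := hb
  refine ⟨?_, fun α hα => ?_⟩
  · simp only [Pi.add_apply, Pi.smul_apply, smul_eq_mul, Finset.sum_add_distrib,
      ← Finset.mul_sum, ha1, hb1, mul_zero, add_zero]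
  · exact add_nonneg (mul_nonneg hp (ha2 α hα)) (mul_nonneg hq (hb2 α hα))

/-- Variational characterization of the projection. -/
lemma bform_proj_nonpos {G : Matrix A A ℝ} (hG : G.PosDef) {C : Set (A → ℝ)}
    (hC : Convex ℝ C) {w V : A → ℝ} (hproj : IsGProj G C w V) {z : A → ℝ} (hz : z ∈ C) :
    bform G (w - V) (z - V) ≤ 0 := by
  set B := bform G (w - V) (z - V) with hB
  set Q := qform G (z - V) with hQ
  have hQ0 : 0 ≤ Q := qform_nonneg hG _
  have key : ∀ t : ℝ, 0 < t → t ≤ 1 → 2 * B ≤ t * Q := by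
    intro t ht0 ht1
    have hmem : (1 - t) • V + t • z ∈ C := hC hproj.1 hz (by linarith) (le_of_lt ht0) (by ring)
    have hle := hproj.2 _ hmem
    have hrw : w - ((1 - t) • V + t • z) = (w - V) - t • (z - V) := by
      ext α; simp [Pi.smul_apply, smul_eq_mul]; ring
    rw [hrw, qform_sub hG.1 (w - V) (t • (z - V)), qform_smul] at hle
    have hb : bform G (w - V) (t • (z - V)) = t * B := by
      unfold bform
      rw [Matrix.mulVec_smul, dotProduct_smul, smul_eq_mul]
      rfl
    rw [hb] at hle
    have hQt : t ^ 2 * qform G (z - V) = t * (t * Q) := by rw [← hQ]; ring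
    nlinarith [sq_nonneg t]
  by_contra hpos
  push_neg at hpos
  set t := min 1 (B / (Q + 1)) with htdef
  have hBQ : 0 < B / (Q + 1) := div_pos hpos (by linarith)
  have ht0 : 0 < t := lt_min one_pos hBQ
  have ht1 : t ≤ 1 := min_le_left _ _
  have h2 := key t ht0 ht1
  have : t * Q ≤ (B / (Q + 1)) * Q := by
    apply mul_le_mul_of_nonneg_right (min_le_right _ _) hQ0
  have hlt : (B / (Q + 1)) * Q < B := by
    rw [div_mul_eq_mul_div, div_lt_iff₀ (by linarith : (0:ℝ) < Q + 1)]
    nlinarith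
  linarith

lemma two_smul_mem_tcone {y z : A → ℝ} (hz : z ∈ tcone y) : (2:ℝ) • z ∈ tcone y :=
  smul_mem_tcone (by norm_num) hz

/-- the key orthogonality: B(w - V, V) = 0 -/
lemma bform_proj_eq_zero {G : Matrix A A ℝ} (hG : G.PosDef) {y w V : A → ℝ}
    (hproj : IsGProj G (tcone y) w V) : bform G (w - V) V = 0 := by
  have h1 := bform_proj_nonpos hG (convex_tcone y) hproj (zero_mem_tcone y)
  have h2 := bform_proj_nonpos hG (convex_tcone y) hproj (two_smul_mem_tcone hproj.1)
  have e1 : (0:A → ℝ) - V = (-1 : ℝ) • V := by ext α; simp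
  have e2 : (2:ℝ) • V - V = V := by ext α; simp [Pi.smul_apply]; ring
  rw [e1] at h1
  rw [e2] at h2
  have hs : bform G (w - V) ((-1 : ℝ) • V) = -(bform G (w - V) V) := by
    unfold bform
    rw [Matrix.mulVec_smul, dotProduct_smul]; simp
  rw [hs] at h1
  linarith

/-- q(V) = B(w, V) -/
lemma qform_eq_bform {G : Matrix A A ℝ} (hG : G.PosDef) {y w V : A → ℝ}
    (hproj : IsGProj G (tcone y) w V) : qform G V = bform G w V := by
  have h := bform_proj_eq_zero hG hproj
  have : bform G (w - V) V = bform G w V - bform G V V := by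
    unfold bform; rw [sub_dotProduct]
  rw [this] at h
  unfold qform bform at *
  linarith

/-- B(G⁻¹ v, V) = v ⬝ᵥ V -/
lemma bform_inv_mulVec {G : Matrix A A ℝ} (hG : G.PosDef) (v V : A → ℝ) :
    bform G (G⁻¹.mulVec v) V = v ⬝ᵥ V := by
  unfold bform
  have hdet : IsUnit G.det := isUnit_iff_ne_zero.2 hG.det_pos.ne'
  have hGt : Gᵀ = G := by simpa [Matrix.conjTranspose_eq_transpose_of_trivial] using hG.1.eq
  have h1 : G⁻¹ *ᵥ v = v ᵥ* G⁻¹ := by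
    rw [← Matrix.mulVec_transpose, Matrix.transpose_nonsing_inv, hGt]
  rw [Matrix.dotProduct_mulVec, h1, Matrix.vecMul_vecMul,
    Matrix.nonsing_inv_mul G hdet, Matrix.vecMul_one]

/-- main pointwise identity: v ⬝ᵥ V = qform G V -/
lemma dot_eq_qform {G : Matrix A A ℝ} (hG : G.PosDef) {y v V : A → ℝ}
    (hproj : IsGProj G (tcone y) (G⁻¹.mulVec v) V) : v ⬝ᵥ V = qform G V := by
  rw [qform_eq_bform hG hproj, bform_inv_mulVec hG]

/-- q(V) ≤ q(w) : Cauchy-Schwarz -/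
lemma qform_proj_le {G : Matrix A A ℝ} (hG : G.PosDef) {y w V : A → ℝ}
    (hproj : IsGProj G (tcone y) w V) : qform G V ≤ qform G w := by
  by_cases hV : V = 0
  · subst hV; simpa [qform] using qform_nonneg hG w
  have hq : qform G V = bform G w V := qform_eq_bform hG hproj
  -- Cauchy-Schwarz: (B w V)^2 ≤ q w * q V
  have hVpos : 0 < qform G V := qform_pos hG hV
  have hcs : (bform G w V) ^ 2 ≤ qform G w * qform G V := by
    have h0 : 0 ≤ qform G ((qform G V) • w - (bform G w V) • V) := qform_nonneg hG _
    rw [qform_sub hG.1 ((qform G V) • w) ((bform G w V) • V), qform_smul, qform_smul] at h0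
    have hb : bform G ((qform G V) • w) ((bform G w V) • V)
        = qform G V * (bform G w V * bform G w V) := by
      unfold bform
      rw [Matrix.mulVec_smul, dotProduct_smul, smul_dotProduct,
        smul_eq_mul, smul_eq_mul]
      ring
    rw [hb] at h0
    have hqq : qform G V * bform G V V = qform G V * qform G V := rfl
    nlinarith [hVpos]
  nlinarith [hVpos, hq]


section Cont
variable {α : Type*} [TopologicalSpace α] {s : Set α}

lemma continuousOn_entry {f : α → Matrix A A ℝ} (hf : ContinuousOn f s) (i j : A) :
    ContinuousOn (fun y => f y i j) s := by
  have := ((continuous_apply j).comp (continuous_apply i)).comp_continuousOn hf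
  exact this

lemma continuousOn_mulVec {f : α → Matrix A A ℝ} {u : α → A → ℝ}
    (hf : ContinuousOn f s) (hu : ContinuousOn u s) :
    ContinuousOn (fun y => (f y).mulVec (u y)) s := by
  apply continuousOn_pi.2
  intro i
  simp only [Matrix.mulVec, dotProduct]
  apply continuousOn_finset_sum
  intro j _
  exact (continuousOn_entry hf i j).mul ((continuous_apply j).comp_continuousOn hu)

lemma continuousOn_dot {u w : α → A → ℝ} (hu : ContinuousOn u s) (hw : ContinuousOn w s) :
    ContinuousOn (fun y => u y ⬝ᵥ w y) s := by
  simp only [dotProduct]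
  apply continuousOn_finset_sum
  intro j _
  exact ((continuous_apply j).comp_continuousOn hu).mul ((continuous_apply j).comp_continuousOn hw)

lemma continuousOn_qform {f : α → Matrix A A ℝ} {u : α → A → ℝ}
    (hf : ContinuousOn f s) (hu : ContinuousOn u s) :
    ContinuousOn (fun y => qform (f y) (u y)) s :=
  continuousOn_dot hu (continuousOn_mulVec hf hu)

lemma continuousOn_matinv {f : α → Matrix A A ℝ} (hf : ContinuousOn f s)
    (hdet : ∀ y ∈ s, (f y).det ≠ 0) :
    ContinuousOn (fun y => (f y)⁻¹) s := by
  have : (fun y => (f y)⁻¹) = fun y => ((f y).det)⁻¹ • (f y).adjugate := by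
    funext y
    rw [Matrix.inv_def, Ring.inverse_eq_inv']
  rw [this]
  exact (((continuous_id.matrix_det).comp_continuousOn hf).inv₀ hdet).smul
    ((continuous_id.matrix_adjugate).comp_continuousOn hf)

end Cont

variable [Nonempty A]

lemma stdSimplex_nonempty' : (stdSimplex ℝ A).Nonempty := by
  classical
  obtain ⟨a⟩ := ‹Nonempty A›
  refine ⟨Pi.single a 1, fun i => ?_, ?_⟩
  · by_cases h : i = a <;> simp [Pi.single_apply, h]
  · simp [Pi.single_apply]

/-- uniform ellipticity constant on the simplex -/
lemma exists_mu {g : (A → ℝ) → Matrix A A ℝ} (hgcont : ContinuousOn g (stdSimplex ℝ A))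
    (hgpd : ∀ y ∈ stdSimplex ℝ A, (g y).PosDef) :
    ∃ μ : ℝ, 0 < μ ∧ ∀ y ∈ stdSimplex ℝ A, ∀ u : A → ℝ, μ * ‖u‖ ^ 2 ≤ qform (g y) u := by
  set K := stdSimplex ℝ A ×ˢ Metric.sphere (0 : A → ℝ) 1 with hK
  have hKc : IsCompact K := (isCompact_stdSimplex ℝ A).prod (isCompact_sphere 0 1)
  have hKne : K.Nonempty := stdSimplex_nonempty'.prod (NormedSpace.sphere_nonempty.2 zero_le_one)
  have hcont : ContinuousOn (fun p : (A → ℝ) × (A → ℝ) => qform (g p.1) p.2) K := by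
    apply continuousOn_qform
    · exact hgcont.comp continuousOn_fst (fun p hp => hp.1)
    · exact continuousOn_snd
  obtain ⟨p₀, hp₀K, hmin⟩ := hKc.exists_isMinOn hKne hcont
  have hp2 : p₀.2 ≠ 0 := by
    intro h
    have := hp₀K.2
    rw [Metric.mem_sphere, h] at this
    simp at this
  have hμpos : 0 < qform (g p₀.1) p₀.2 := qform_pos (hgpd _ hp₀K.1) hp2
  refine ⟨qform (g p₀.1) p₀.2, hμpos, fun y hy u => ?_⟩
  by_cases hu : u = 0
  · subst hu; simp [qform]
  · have hnu : ‖u‖ ≠ 0 := norm_ne_zero_iff.2 hu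
    set c := ‖u‖ with hc
    have huc : u = c • (c⁻¹ • u) := by rw [smul_inv_smul₀ hnu]
    have hunit : (c⁻¹ • u) ∈ Metric.sphere (0 : A → ℝ) 1 := by
      simp only [mem_sphere_iff_norm, sub_zero, norm_smul, norm_inv, norm_norm,
        Real.norm_eq_abs, abs_of_nonneg (norm_nonneg u)]
      rw [hc, abs_of_nonneg (norm_nonneg u)]
      exact inv_mul_cancel₀ hnu
    have h1 : qform (g p₀.1) p₀.2 ≤ qform (g y) (c⁻¹ • u) :=
      hmin (Set.mk_mem_prod hy hunit : (y, c⁻¹ • u) ∈ K)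
    have hscale : qform (g y) u = c ^ 2 * qform (g y) (c⁻¹ • u) := by
      conv_lhs => rw [huc]
      rw [qform_smul]
    have hcc : ‖u‖ ^ 2 = c ^ 2 := rfl
    rw [hscale, hcc, mul_comm]
    exact mul_le_mul_of_nonneg_left h1 (sq_nonneg c)

/-- uniform bound on ‖V‖ over the simplex -/
lemma exists_M {g : (A → ℝ) → Matrix A A ℝ} (hgcont : ContinuousOn g (stdSimplex ℝ A))
    (hgpd : ∀ y ∈ stdSimplex ℝ A, (g y).PosDef)
    {v : (A → ℝ) → (A → ℝ)} (hvcont : ContinuousOn v (stdSimplex ℝ A))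
    {V : (A → ℝ) → (A → ℝ)}
    (hV : ∀ y ∈ stdSimplex ℝ A, IsGProj (g y) (tcone y) ((g y)⁻¹.mulVec (v y)) (V y)) :
    ∃ M : ℝ, 0 < M ∧ ∀ y ∈ stdSimplex ℝ A, ‖V y‖ ≤ M := by
  obtain ⟨μ, hμ, hμle⟩ := exists_mu hgcont hgpd
  have hdet : ∀ y ∈ stdSimplex ℝ A, (g y).det ≠ 0 := fun y hy => (hgpd y hy).det_pos.ne'
  have hwcont : ContinuousOn (fun y => (g y)⁻¹.mulVec (v y)) (stdSimplex ℝ A) :=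
    continuousOn_mulVec (continuousOn_matinv hgcont hdet) hvcont
  have hqwcont : ContinuousOn (fun y => qform (g y) ((g y)⁻¹.mulVec (v y))) (stdSimplex ℝ A) :=
    continuousOn_qform hgcont hwcont
  obtain ⟨y₁, hy₁, hmax⟩ := (isCompact_stdSimplex ℝ A).exists_isMaxOn stdSimplex_nonempty' hqwcont
  set Cq := qform (g y₁) ((g y₁)⁻¹.mulVec (v y₁)) with hCq
  have hCq0 : 0 ≤ Cq := qform_nonneg (hgpd _ hy₁) _
  refine ⟨Real.sqrt (Cq / μ) + 1, by positivity, fun y hy => ?_⟩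
  have h1 : qform (g y) (V y) ≤ Cq := le_trans (qform_proj_le (hgpd y hy) (hV y hy)) (hmax hy)
  have h2 : μ * ‖V y‖ ^ 2 ≤ Cq := le_trans (hμle y hy (V y)) h1
  have h3 : ‖V y‖ ^ 2 ≤ Cq / μ := by
    rw [le_div_iff₀ hμ]; linarith
  have := (Real.le_sqrt (norm_nonneg (V y)) (by positivity)).2 h3
  linarith


lemma qform_diff_eq {G : Matrix A A ℝ} (hG : G.PosDef) {y w V : A → ℝ}
    (hproj : IsGProj G (tcone y) w V) :
    qform G (w - V) = qform G w - qform G V := by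
  rw [qform_sub hG.1]
  have h := qform_eq_bform hG hproj
  linarith

/-- lower semicontinuity of `W y = v y ⬝ᵥ V y` within the simplex -/
lemma W_lower_bound_nhds {g : (A → ℝ) → Matrix A A ℝ}
    (hgcont : ContinuousOn g (stdSimplex ℝ A))
    (hgpd : ∀ y ∈ stdSimplex ℝ A, (g y).PosDef)
    {v : (A → ℝ) → (A → ℝ)} (hvcont : ContinuousOn v (stdSimplex ℝ A))
    {V : (A → ℝ) → (A → ℝ)}
    (hV : ∀ y ∈ stdSimplex ℝ A, IsGProj (g y) (tcone y) ((g y)⁻¹.mulVec (v y)) (V y))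
    {y₀ : A → ℝ} (hy₀ : y₀ ∈ stdSimplex ℝ A) {c : ℝ} (hc : c < v y₀ ⬝ᵥ V y₀) :
    ∃ O : Set (A → ℝ), IsOpen O ∧ y₀ ∈ O ∧
      ∀ y ∈ O ∩ stdSimplex ℝ A, c < v y ⬝ᵥ V y := by
  set X := stdSimplex ℝ A with hX
  set w : (A → ℝ) → (A → ℝ) := fun y => (g y)⁻¹.mulVec (v y) with hw
  have hdet : ∀ y ∈ X, (g y).det ≠ 0 := fun y hy => (hgpd y hy).det_pos.ne'
  have hwcont : ContinuousOn w X :=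
    continuousOn_mulVec (continuousOn_matinv hgcont hdet) hvcont
  have hwV : ∀ y ∈ X, v y ⬝ᵥ V y = qform (g y) (w y) - qform (g y) (w y - V y) := by
    intro y hy
    rw [dot_eq_qform (hgpd y hy) (hV y hy), qform_diff_eq (hgpd y hy) (hV y hy)]
    ring
  set F : (A → ℝ) → ℝ := fun y => qform (g y) (w y) - qform (g y) (w y - V y₀) with hF
  have hFcont : ContinuousOn F X := by
    apply ContinuousOn.sub (continuousOn_qform hgcont hwcont)
    exact continuousOn_qform hgcont (hwcont.sub continuousOn_const)
  have hFy₀ : F y₀ = v y₀ ⬝ᵥ V y₀ := by rw [hwV y₀ hy₀]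
  have hmem : F ⁻¹' Set.Ioi c ∈ nhdsWithin y₀ X :=
    (hFcont y₀ hy₀) (Ioi_mem_nhds (by rw [hFy₀]; exact hc))
  obtain ⟨O, hOopen, hy₀O, hOsub⟩ := mem_nhdsWithin.1 hmem
  set P : Set (A → ℝ) := ⋂ α : A, {y | 0 < y₀ α → 0 < y α} with hP
  have hPopen : IsOpen P := by
    apply isOpen_iInter_of_finite
    intro α
    by_cases h : 0 < y₀ α
    · have : {y : A → ℝ | 0 < y₀ α → 0 < y α} = {y | 0 < y α} := by
        ext y; simp [h]
      rw [this]
      exact isOpen_lt continuous_const (continuous_apply α)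
    · have : {y : A → ℝ | 0 < y₀ α → 0 < y α} = Set.univ := by
        ext y; simp [h]
      rw [this]; exact isOpen_univ
  have hy₀P : y₀ ∈ P := Set.mem_iInter.2 fun α h => h
  refine ⟨O ∩ P, hOopen.inter hPopen, ⟨hy₀O, hy₀P⟩, ?_⟩
  rintro y ⟨⟨hyO, hyP⟩, hyX⟩
  have hcone : V y₀ ∈ tcone y := by
    obtain ⟨h1, h2⟩ := (hV y₀ hy₀).1
    refine ⟨h1, fun α hα => ?_⟩
    apply h2
    by_contra h0
    have hy₀α : 0 < y₀ α := lt_of_le_of_ne (hy₀.1 α) (Ne.symm h0)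
    have := Set.mem_iInter.1 hyP α hy₀α
    rw [hα] at this
    exact lt_irrefl 0 this
  have hmin : qform (g y) (w y - V y) ≤ qform (g y) (w y - V y₀) := (hV y hyX).2 _ hcone
  have hFy : c < F y := hOsub ⟨hyO, hyX⟩
  rw [hwV y hyX]
  have : F y ≤ qform (g y) (w y) - qform (g y) (w y - V y) := by
    simp only [hF]; linarith
  linarith

lemma W_pos {g : (A → ℝ) → Matrix A A ℝ}
    (hgpd : ∀ y ∈ stdSimplex ℝ A, (g y).PosDef)
    {v V : (A → ℝ) → (A → ℝ)}
    (hV : ∀ y ∈ stdSimplex ℝ A, IsGProj (g y) (tcone y) ((g y)⁻¹.mulVec (v y)) (V y))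
    {y : A → ℝ} (hy : y ∈ stdSimplex ℝ A) (hVy : V y ≠ 0) : 0 < v y ⬝ᵥ V y := by
  rw [dot_eq_qform (hgpd y hy) (hV y hy)]
  exact qform_pos (hgpd y hy) hVy

lemma W_nonneg {g : (A → ℝ) → Matrix A A ℝ}
    (hgpd : ∀ y ∈ stdSimplex ℝ A, (g y).PosDef)
    {v V : (A → ℝ) → (A → ℝ)}
    (hV : ∀ y ∈ stdSimplex ℝ A, IsGProj (g y) (tcone y) ((g y)⁻¹.mulVec (v y)) (V y))
    {y : A → ℝ} (hy : y ∈ stdSimplex ℝ A) : 0 ≤ v y ⬝ᵥ V y := by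
  rw [dot_eq_qform (hgpd y hy) (hV y hy)]
  exact qform_nonneg (hgpd y hy) _

/-- positive lower bound for W on a compact set avoiding rest points -/
lemma exists_pos_on_compact {g : (A → ℝ) → Matrix A A ℝ}
    (hgcont : ContinuousOn g (stdSimplex ℝ A))
    (hgpd : ∀ y ∈ stdSimplex ℝ A, (g y).PosDef)
    {v : (A → ℝ) → (A → ℝ)} (hvcont : ContinuousOn v (stdSimplex ℝ A))
    {V : (A → ℝ) → (A → ℝ)}
    (hV : ∀ y ∈ stdSimplex ℝ A, IsGProj (g y) (tcone y) ((g y)⁻¹.mulVec (v y)) (V y))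
    {K : Set (A → ℝ)} (hK : IsCompact K) (hKX : K ⊆ stdSimplex ℝ A)
    (hne : ∀ y ∈ K, V y ≠ 0) :
    ∃ c : ℝ, 0 < c ∧ ∀ y ∈ K, c ≤ v y ⬝ᵥ V y := by
  classical
  rcases Set.eq_empty_or_nonempty K with hKe | hKne
  · exact ⟨1, one_pos, fun y hy => absurd (hKe ▸ hy) (Set.notMem_empty y)⟩
  have hWpos : ∀ p : K, 0 < v p ⬝ᵥ V p := fun p => W_pos hgpd hV (hKX p.2) (hne p p.2)
  have hchoice : ∀ p : K, ∃ O : Set (A → ℝ), IsOpen O ∧ (p : A → ℝ) ∈ O ∧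
      ∀ y ∈ O ∩ stdSimplex ℝ A, (v p ⬝ᵥ V p) / 2 < v y ⬝ᵥ V y := by
    intro p
    exact W_lower_bound_nhds hgcont hgpd hvcont hV (hKX p.2) (by linarith [hWpos p])
  choose O hOopen hOmem hOlt using hchoice
  have hcover : K ⊆ ⋃ p : K, O p := by
    intro y hy
    exact Set.mem_iUnion.2 ⟨⟨y, hy⟩, hOmem ⟨y, hy⟩⟩
  obtain ⟨t, ht⟩ := hK.elim_finite_subcover O hOopen hcover
  have htne : t.Nonempty := by
    obtain ⟨y, hy⟩ := hKne
    obtain ⟨p, hp, _⟩ := Set.mem_iUnion₂.1 (ht hy)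
    exact ⟨p, hp⟩
  obtain ⟨p₀, hp₀t, hp₀min⟩ := t.exists_min_image (fun p => (v p ⬝ᵥ V p) / 2) htne
  refine ⟨(v p₀ ⬝ᵥ V p₀) / 2, by linarith [hWpos p₀], fun y hy => ?_⟩
  obtain ⟨p, hpt, hyO⟩ := Set.mem_iUnion₂.1 (ht hy)
  have h1 := hOlt p y ⟨hyO, hKX hy⟩
  have h2 := hp₀min p hpt
  linarith


lemma dot_abs_le (u w : A → ℝ) : |u ⬝ᵥ w| ≤ (Fintype.card A : ℝ) * ‖u‖ * ‖w‖ := by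
  simp only [dotProduct]
  calc |∑ α, u α * w α| ≤ ∑ α, |u α * w α| := Finset.abs_sum_le_sum_abs _ _
    _ ≤ ∑ _α : A, ‖u‖ * ‖w‖ := by
        apply Finset.sum_le_sum
        intro α _
        rw [abs_mul]
        exact mul_le_mul (by simpa using norm_le_pi_norm u α)
          (by simpa using norm_le_pi_norm w α) (abs_nonneg _) (norm_nonneg _)
    _ = (Fintype.card A : ℝ) * ‖u‖ * ‖w‖ := by
        rw [Finset.sum_const, Finset.card_univ, nsmul_eq_mul]; ring

open MeasureTheory intervalIntegral in
/-- The key identity: `f (x T) - f (x 0) = ∫₀ᵀ v(x s) ⬝ᵥ V(x s) ds`. -/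
lemma key_identity {g : (A → ℝ) → Matrix A A ℝ} (hgcont : ContinuousOn g (stdSimplex ℝ A))
    (hgpd : ∀ y ∈ stdSimplex ℝ A, (g y).PosDef)
    {v : (A → ℝ) → (A → ℝ)} (hvcont : ContinuousOn v (stdSimplex ℝ A))
    {V : (A → ℝ) → (A → ℝ)}
    (hV : ∀ y ∈ stdSimplex ℝ A, IsGProj (g y) (tcone y) ((g y)⁻¹.mulVec (v y)) (V y))
    {f : (A → ℝ) → ℝ} {U : Set (A → ℝ)} (hU : IsOpen U) (hXU : stdSimplex ℝ A ⊆ U)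
    {f' : (A → ℝ) → ((A → ℝ) →L[ℝ] ℝ)}
    (hf' : ∀ y ∈ U, HasFDerivAt f (f' y) y) (hf'cont : ContinuousOn f' U)
    (hpot : ∀ y ∈ stdSimplex ℝ A, ∀ z : A → ℝ, f' y z = v y ⬝ᵥ z)
    {x : ℝ → (A → ℝ)} (hxX : ∀ t : ℝ, 0 ≤ t → x t ∈ stdSimplex ℝ A)
    (hxcont : ContinuousOn x (Set.Ici 0))
    (hloc : ∀ t : ℝ, 0 ≤ t → IntervalIntegrable (fun s => V (x s)) MeasureTheory.volume 0 t)
    (hsol : ∀ t : ℝ, 0 ≤ t → x t = x 0 + ∫ s in (0:ℝ)..t, V (x s))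
    {T : ℝ} (hT : 0 ≤ T) :
    f (x T) - f (x 0) = ∫ s in (0:ℝ)..T, v (x s) ⬝ᵥ V (x s) := by
  classical
  set X := stdSimplex ℝ A with hXdef
  obtain ⟨M, hM0, hMle⟩ := exists_M hgcont hgpd hvcont hV
  have hVab : ∀ a b : ℝ, 0 ≤ a → 0 ≤ b →
      IntervalIntegrable (fun s => V (x s)) volume a b :=
    fun a b ha hb => ((hloc a ha).symm.trans (hloc b hb))
  have hvx : ContinuousOn (fun s => v (x s)) (Set.Ici (0:ℝ)) :=
    hvcont.comp hxcont (fun s hs => hxX s hs)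
  have huIcc : ∀ a b : ℝ, 0 ≤ a → a ≤ b → Set.uIcc a b ⊆ Set.Ici (0:ℝ) := by
    intro a b ha hab s hs
    rw [Set.uIcc_of_le hab] at hs
    exact le_trans ha hs.1
  have hmulint : ∀ (w : ℝ → (A → ℝ)) (a b : ℝ), 0 ≤ a → a ≤ b →
      ContinuousOn w (Set.uIcc a b) →
      IntervalIntegrable (fun s => w s ⬝ᵥ V (x s)) volume a b := by
    intro w a b ha hab hw
    have hVi := hVab a b ha (le_trans ha hab)
    have hcoord : ∀ α : A, IntervalIntegrable (fun s => V (x s) α) volume a b :=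
      fun α => ⟨(ContinuousLinearMap.proj α : (A → ℝ) →L[ℝ] ℝ).integrable_comp hVi.1,
                (ContinuousLinearMap.proj α : (A → ℝ) →L[ℝ] ℝ).integrable_comp hVi.2⟩
    have heq : (fun s => w s ⬝ᵥ V (x s)) = ∑ α : A, fun s => w s α * V (x s) α := by
      funext s
      simp [dotProduct, Finset.sum_apply]
    rw [heq]
    apply IntervalIntegrable.sum
    intro α _
    exact (hcoord α).continuousOn_mul ((continuous_apply α).comp_continuousOn hw)
  have hWint : ∀ a b : ℝ, 0 ≤ a → a ≤ b →
      IntervalIntegrable (fun s => v (x s) ⬝ᵥ V (x s)) volume a b :=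
    fun a b ha hab => hmulint _ a b ha hab (hvx.mono (huIcc a b ha hab))
  have hxsub : ∀ a b : ℝ, 0 ≤ a → 0 ≤ b → x b - x a = ∫ s in a..b, V (x s) := by
    intro a b ha hb
    rw [hsol a ha, hsol b hb]
    rw [show x 0 + (∫ s in (0:ℝ)..b, V (x s)) - (x 0 + ∫ s in (0:ℝ)..a, V (x s))
        = (∫ s in (0:ℝ)..b, V (x s)) - ∫ s in (0:ℝ)..a, V (x s) by abel]
    exact intervalIntegral.integral_interval_sub_left (hloc b hb) (hloc a ha)
  have hxnorm : ∀ a b : ℝ, 0 ≤ a → a ≤ b → ‖x b - x a‖ ≤ M * (b - a) := by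
    intro a b ha hab
    rw [hxsub a b ha (le_trans ha hab)]
    have := intervalIntegral.norm_integral_le_of_norm_le_const (C := M)
      (f := fun s => V (x s)) (a := a) (b := b) ?_
    · rwa [abs_of_nonneg (sub_nonneg.2 hab)] at this
    · intro s hs
      rw [Set.uIoc_of_le hab] at hs
      exact hMle _ (hxX s (le_trans ha (le_of_lt hs.1)))
  set cA : ℝ := (Fintype.card A : ℝ) with hcA
  have hcA0 : 0 ≤ cA := Nat.cast_nonneg _
  set C : ℝ := M * (1 + cA) with hC
  have hC0 : 0 ≤ C := by positivity
  set D : ℝ := f (x T) - f (x 0) - ∫ s in (0:ℝ)..T, v (x s) ⬝ᵥ V (x s) with hD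
  have main : ∀ ε : ℝ, 0 < ε → |D| ≤ ε * (C * T) := by
    intro ε hε
    have hf'X : ContinuousOn f' X := hf'cont.mono hXU
    obtain ⟨δ₁, hδ₁, h1⟩ := Metric.uniformContinuousOn_iff.1
      ((isCompact_stdSimplex ℝ A).uniformContinuousOn_of_continuous hf'X) ε hε
    obtain ⟨δ₂, hδ₂, h2⟩ := Metric.uniformContinuousOn_iff.1
      ((isCompact_stdSimplex ℝ A).uniformContinuousOn_of_continuous hvcont) ε hε
    set η : ℝ := min δ₁ δ₂ with hη
    have hηpos : 0 < η := lt_min hδ₁ hδ₂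
    obtain ⟨n, hn⟩ := exists_nat_gt (M * T / η)
    set N : ℕ := n + 1 with hN
    have hN0 : 0 < (N : ℝ) := by positivity
    have hstep : M * (T / N) < η := by
      have h1' : M * T / η < N := lt_trans hn (by exact_mod_cast Nat.lt_succ_self n)
      rw [div_lt_iff₀ hηpos] at h1'
      rw [mul_div_assoc']
      rw [div_lt_iff₀ hN0]
      linarith
    set τ : ℕ → ℝ := fun i => i * (T / N) with hτ
    have hτ0 : τ 0 = 0 := by simp [hτ]
    have hτN : τ N = T := by
      simp only [hτ]
      field_simp
    have hτstep : ∀ i : ℕ, τ (i + 1) - τ i = T / N := by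
      intro i
      simp only [hτ]
      push_cast
      ring
    have hτnn : ∀ i : ℕ, 0 ≤ τ i := fun i => by positivity
    have hτmono : ∀ i : ℕ, τ i ≤ τ (i + 1) := by
      intro i
      have := hτstep i
      have h0 : 0 ≤ T / N := by positivity
      linarith
    have hseg : ∀ a b : ℝ, 0 ≤ a → a ≤ b → M * (b - a) < η →
        |f (x b) - f (x a) - ∫ s in a..b, v (x s) ⬝ᵥ V (x s)| ≤ ε * C * (b - a) := by
      intro a b ha hab hsmall
      have hb' : 0 ≤ b := le_trans ha hab
      have hxa : x a ∈ X := hxX a ha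
      have hxb : x b ∈ X := hxX b hb'
      have hsub : segment ℝ (x a) (x b) ⊆ X :=
        (convex_stdSimplex ℝ A).segment_subset hxa hxb
      have hder : ∀ z ∈ segment ℝ (x a) (x b),
          HasFDerivWithinAt f (f' z) (segment ℝ (x a) (x b)) z :=
        fun z hz => (hf' z (hXU (hsub hz))).hasFDerivWithinAt
      have hdistseg : ∀ z ∈ segment ℝ (x a) (x b), ‖z - x a‖ ≤ ‖x b - x a‖ := by
        rintro z ⟨p, q, hp, hq, hpq, rfl⟩
        have hz : p • x a + q • x b - x a = q • (x b - x a) := by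
          funext α
          simp only [Pi.add_apply, Pi.sub_apply, Pi.smul_apply, smul_eq_mul]
          linear_combination x a α * hpq
        rw [hz, norm_smul, Real.norm_eq_abs, abs_of_nonneg hq]
        have hq1 : q ≤ 1 := by linarith
        exact mul_le_of_le_one_left (norm_nonneg _) hq1
      have hbound : ∀ z ∈ segment ℝ (x a) (x b), ‖f' z - f' (x a)‖ ≤ ε := by
        intro z hz
        have hzd : dist z (x a) < δ₁ := by
          rw [dist_eq_norm]
          calc ‖z - x a‖ ≤ ‖x b - x a‖ := hdistseg z hz
            _ ≤ M * (b - a) := hxnorm a b ha hab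
            _ < η := hsmall
            _ ≤ δ₁ := min_le_left _ _
        have := h1 z (hsub hz) (x a) hxa hzd
        rw [dist_eq_norm] at this
        exact le_of_lt this
      have ht1 := Convex.norm_image_sub_le_of_norm_hasFDerivWithin_le' hder hbound
        (convex_segment _ _) (left_mem_segment ℝ (x a) (x b)) (right_mem_segment ℝ (x a) (x b))
      have hlin : f' (x a) (x b - x a) = ∫ s in a..b, v (x a) ⬝ᵥ V (x s) := by
        rw [hxsub a b ha hb',
          ← ContinuousLinearMap.intervalIntegral_comp_comm _ (hVab a b ha hb')]
        apply intervalIntegral.integral_congr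
        intro s _
        exact hpot (x a) hxa (V (x s))
      have hint1 : IntervalIntegrable (fun s => v (x a) ⬝ᵥ V (x s)) volume a b :=
        hmulint (fun _ => v (x a)) a b ha hab continuousOn_const
      have hint2 : IntervalIntegrable (fun s => v (x s) ⬝ᵥ V (x s)) volume a b :=
        hWint a b ha hab
      have ht2 : |(∫ s in a..b, v (x a) ⬝ᵥ V (x s)) - ∫ s in a..b, v (x s) ⬝ᵥ V (x s)|
          ≤ ε * (cA * M) * (b - a) := by
        rw [← intervalIntegral.integral_sub hint1 hint2]
        have hb2 : ∀ s ∈ Set.uIoc a b, ‖v (x a) ⬝ᵥ V (x s) - v (x s) ⬝ᵥ V (x s)‖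
            ≤ ε * (cA * M) := by
          intro s hs
          rw [Set.uIoc_of_le hab] at hs
          have hs0 : 0 ≤ s := le_trans ha (le_of_lt hs.1)
          have hxs : x s ∈ X := hxX s hs0
          have hdd : dist (x a) (x s) < δ₂ := by
            rw [dist_eq_norm, ← norm_neg]
            have hneg : -(x a - x s) = x s - x a := by abel
            rw [hneg]
            calc ‖x s - x a‖ ≤ M * (s - a) := hxnorm a s ha (le_of_lt hs.1)
              _ ≤ M * (b - a) := by
                  apply mul_le_mul_of_nonneg_left _ (le_of_lt hM0)
                  linarith [hs.2]
              _ < η := hsmall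
              _ ≤ δ₂ := min_le_right _ _
          have hvv : ‖v (x a) - v (x s)‖ ≤ ε := by
            have := h2 (x a) hxa (x s) hxs hdd
            rw [dist_eq_norm] at this
            exact le_of_lt this
          rw [show v (x a) ⬝ᵥ V (x s) - v (x s) ⬝ᵥ V (x s)
              = (v (x a) - v (x s)) ⬝ᵥ V (x s) from (sub_dotProduct _ _ _).symm]
          rw [Real.norm_eq_abs]
          calc |(v (x a) - v (x s)) ⬝ᵥ V (x s)|
              ≤ cA * ‖v (x a) - v (x s)‖ * ‖V (x s)‖ := dot_abs_le _ _
            _ ≤ cA * ε * M := by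
                apply mul_le_mul _ (hMle _ hxs) (norm_nonneg _) (by positivity)
                exact mul_le_mul_of_nonneg_left hvv hcA0
            _ = ε * (cA * M) := by ring
        have := intervalIntegral.norm_integral_le_of_norm_le_const hb2
        rwa [abs_of_nonneg (sub_nonneg.2 hab), Real.norm_eq_abs] at this
      have hsplit : f (x b) - f (x a) - (∫ s in a..b, v (x s) ⬝ᵥ V (x s))
          = (f (x b) - f (x a) - f' (x a) (x b - x a))
            + ((∫ s in a..b, v (x a) ⬝ᵥ V (x s)) - ∫ s in a..b, v (x s) ⬝ᵥ V (x s)) := by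
        rw [hlin]; ring
      rw [hsplit]
      have ht1' : |f (x b) - f (x a) - f' (x a) (x b - x a)| ≤ ε * (M * (b - a)) := by
        rw [← Real.norm_eq_abs]
        calc ‖f (x b) - f (x a) - f' (x a) (x b - x a)‖ ≤ ε * ‖x b - x a‖ := ht1
          _ ≤ ε * (M * (b - a)) :=
            mul_le_mul_of_nonneg_left (hxnorm a b ha hab) (le_of_lt hε)
      calc |(f (x b) - f (x a) - f' (x a) (x b - x a))
            + ((∫ s in a..b, v (x a) ⬝ᵥ V (x s)) - ∫ s in a..b, v (x s) ⬝ᵥ V (x s))|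
          ≤ |f (x b) - f (x a) - f' (x a) (x b - x a)|
            + |(∫ s in a..b, v (x a) ⬝ᵥ V (x s)) - ∫ s in a..b, v (x s) ⬝ᵥ V (x s)| :=
            abs_add_le _ _
        _ ≤ ε * (M * (b - a)) + ε * (cA * M) * (b - a) := add_le_add ht1' ht2
        _ = ε * C * (b - a) := by rw [hC]; ring
    have hTi : ∀ i : ℕ, i < N → IntervalIntegrable (fun s => v (x s) ⬝ᵥ V (x s))
        volume (τ i) (τ (i + 1)) := fun i _ => hWint _ _ (hτnn i) (hτmono i)
    have hsum := intervalIntegral.sum_integral_adjacent_intervals hTi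
    rw [hτ0, hτN] at hsum
    have htel := Finset.sum_range_sub (fun i => f (x (τ i))) N
    have hDsum : D = ∑ i ∈ Finset.range N,
        (f (x (τ (i + 1))) - f (x (τ i)) - ∫ s in (τ i)..(τ (i + 1)), v (x s) ⬝ᵥ V (x s)) := by
      rw [Finset.sum_sub_distrib, htel, hsum, hD, hτ0, hτN]
    rw [hDsum]
    calc |∑ i ∈ Finset.range N,
        (f (x (τ (i + 1))) - f (x (τ i)) - ∫ s in (τ i)..(τ (i + 1)), v (x s) ⬝ᵥ V (x s))|
        ≤ ∑ i ∈ Finset.range N,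
          |f (x (τ (i + 1))) - f (x (τ i)) - ∫ s in (τ i)..(τ (i + 1)), v (x s) ⬝ᵥ V (x s)| :=
          Finset.abs_sum_le_sum_abs _ _
      _ ≤ ∑ _i ∈ Finset.range N, ε * C * (T / N) := by
          apply Finset.sum_le_sum
          intro i _
          have := hseg (τ i) (τ (i + 1)) (hτnn i) (hτmono i)
            (by rw [hτstep i]; exact hstep)
          rwa [hτstep i] at this
      _ = ε * (C * T) := by
          rw [Finset.sum_const, Finset.card_range, nsmul_eq_mul]
          field_simp
  have hD0 : |D| ≤ 0 := by
    have h' : ∀ ε : ℝ, 0 < ε → |D| ≤ ε := by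
      intro ε hε
      have h1 := main (ε / (C * T + 1)) (by positivity)
      have h2 : (ε / (C * T + 1)) * (C * T) ≤ ε := by
        rw [div_mul_eq_mul_div, div_le_iff₀ (by positivity : (0:ℝ) < C * T + 1)]
        have hCT : 0 ≤ C * T := mul_nonneg hC0 hT
        nlinarith
      linarith
    by_contra hcon
    push_neg at hcon
    have := h' (|D| / 2) (by linarith)
    linarith
  have hDz : D = 0 := abs_eq_zero.1 (le_antisymm hD0 (abs_nonneg _))
  rw [hD] at hDz
  linarith


open MeasureTheory in
lemma W_integrable {v V : (A → ℝ) → (A → ℝ)} (hvcont : ContinuousOn v (stdSimplex ℝ A))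
    {x : ℝ → (A → ℝ)} (hxX : ∀ t : ℝ, 0 ≤ t → x t ∈ stdSimplex ℝ A)
    (hxcont : ContinuousOn x (Set.Ici 0))
    (hloc : ∀ t : ℝ, 0 ≤ t → IntervalIntegrable (fun s => V (x s)) MeasureTheory.volume 0 t)
    {a b : ℝ} (ha : 0 ≤ a) (hab : a ≤ b) :
    IntervalIntegrable (fun s => v (x s) ⬝ᵥ V (x s)) volume a b := by
  classical
  have hb : 0 ≤ b := le_trans ha hab
  have hVi : IntervalIntegrable (fun s => V (x s)) volume a b :=
    (hloc a ha).symm.trans (hloc b hb)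
  have hvx : ContinuousOn (fun s => v (x s)) (Set.Ici (0:ℝ)) :=
    hvcont.comp hxcont (fun s hs => hxX s hs)
  have hcoord : ∀ α : A, IntervalIntegrable (fun s => V (x s) α) volume a b :=
    fun α => ⟨(ContinuousLinearMap.proj α : (A → ℝ) →L[ℝ] ℝ).integrable_comp hVi.1,
              (ContinuousLinearMap.proj α : (A → ℝ) →L[ℝ] ℝ).integrable_comp hVi.2⟩
  have heq : (fun s => v (x s) ⬝ᵥ V (x s)) = ∑ α : A, fun s => v (x s) α * V (x s) α := by
    funext s
    simp [dotProduct, Finset.sum_apply]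
  rw [heq]
  apply IntervalIntegrable.sum
  intro α _
  apply (hcoord α).continuousOn_mul
  apply (continuous_apply α).comp_continuousOn
  apply hvx.mono
  intro s hs
  rw [Set.uIcc_of_le hab] at hs
  exact le_trans ha hs.1

lemma x_lip {V : (A → ℝ) → (A → ℝ)} {x : ℝ → (A → ℝ)} {M : ℝ}
    (hxX : ∀ t : ℝ, 0 ≤ t → x t ∈ stdSimplex ℝ A)
    (hMle : ∀ y ∈ stdSimplex ℝ A, ‖V y‖ ≤ M)
    (hloc : ∀ t : ℝ, 0 ≤ t → IntervalIntegrable (fun s => V (x s)) MeasureTheory.volume 0 t)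
    (hsol : ∀ t : ℝ, 0 ≤ t → x t = x 0 + ∫ s in (0:ℝ)..t, V (x s))
    {a b : ℝ} (ha : 0 ≤ a) (hab : a ≤ b) : ‖x b - x a‖ ≤ M * (b - a) := by
  have hb : 0 ≤ b := le_trans ha hab
  have hxsub : x b - x a = ∫ s in a..b, V (x s) := by
    rw [hsol a ha, hsol b hb]
    rw [show x 0 + (∫ s in (0:ℝ)..b, V (x s)) - (x 0 + ∫ s in (0:ℝ)..a, V (x s))
        = (∫ s in (0:ℝ)..b, V (x s)) - ∫ s in (0:ℝ)..a, V (x s) by abel]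
    exact intervalIntegral.integral_interval_sub_left (hloc b hb) (hloc a ha)
  rw [hxsub]
  have := intervalIntegral.norm_integral_le_of_norm_le_const (C := M)
    (f := fun s => V (x s)) (a := a) (b := b) ?_
  · rwa [abs_of_nonneg (sub_nonneg.2 hab)] at this
  · intro s hs
    rw [Set.uIoc_of_le hab] at hs
    exact hMle _ (hxX s (le_trans ha (le_of_lt hs.1)))

end Stmt6Aux

open Stmt6Aux MeasureTheory in
/-- global convergence in potential games.  For Riemannian game dynamics
`V(y) = Π_{TC_X(y)}^{g(y)}(g(y)⁻¹ v(y))` generated by a potential game (`∇f = v` on the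
simplex, `f` being `C¹` on an open neighborhood of the simplex), along every Carathéodory
solution the potential `f(x(t))` is nondecreasing, strictly increases after any time where
`V(x(t)) ≠ 0`, and `x(t)` converges to the set of rest points `{V = 0}`. -/
theorem stmt_6 {A : Type*} [Fintype A] [DecidableEq A] [Nonempty A]
    (g : (A → ℝ) → Matrix A A ℝ) (hgcont : ContinuousOn g (stdSimplex ℝ A))
    (hgpd : ∀ y ∈ stdSimplex ℝ A, (g y).PosDef)
    (v : (A → ℝ) → (A → ℝ)) (hvcont : ContinuousOn v (stdSimplex ℝ A))
    (V : (A → ℝ) → (A → ℝ))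
    (hV : ∀ y ∈ stdSimplex ℝ A, IsGProj (g y) (tcone y) ((g y)⁻¹.mulVec (v y)) (V y))
    (f : (A → ℝ) → ℝ) (U : Set (A → ℝ)) (hU : IsOpen U) (hXU : stdSimplex ℝ A ⊆ U)
    (f' : (A → ℝ) → ((A → ℝ) →L[ℝ] ℝ))
    (hf' : ∀ y ∈ U, HasFDerivAt f (f' y) y) (hf'cont : ContinuousOn f' U)
    (hpot : ∀ y ∈ stdSimplex ℝ A, ∀ z : A → ℝ, f' y z = v y ⬝ᵥ z)
    (x : ℝ → (A → ℝ)) (hxX : ∀ t : ℝ, 0 ≤ t → x t ∈ stdSimplex ℝ A)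
    (hxcont : ContinuousOn x (Set.Ici 0))
    (hloc : ∀ t : ℝ, 0 ≤ t → IntervalIntegrable (fun s => V (x s)) MeasureTheory.volume 0 t)
    (hsol : ∀ t : ℝ, 0 ≤ t → x t = x 0 + ∫ s in (0:ℝ)..t, V (x s)) :
    (∀ s t : ℝ, 0 ≤ s → s ≤ t → f (x s) ≤ f (x t)) ∧
    (∀ t : ℝ, 0 ≤ t → V (x t) ≠ 0 → ∀ t' : ℝ, t < t' → f (x t) < f (x t')) ∧
    Tendsto (fun t => Metric.infDist (x t) {y ∈ stdSimplex ℝ A | V y = 0})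
      atTop (nhds 0) := by

  classical
  have hkey : ∀ T : ℝ, 0 ≤ T →
      f (x T) - f (x 0) = ∫ s in (0:ℝ)..T, v (x s) ⬝ᵥ V (x s) :=
    fun T hT => key_identity hgcont hgpd hvcont hV hU hXU hf' hf'cont hpot hxX hxcont
      hloc hsol hT
  have hWint : ∀ a b : ℝ, 0 ≤ a → a ≤ b →
      IntervalIntegrable (fun s => v (x s) ⬝ᵥ V (x s)) volume a b :=
    fun a b ha hab => W_integrable hvcont hxX hxcont hloc ha hab
  have hdiff : ∀ s t : ℝ, 0 ≤ s → s ≤ t →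
      f (x t) - f (x s) = ∫ u in s..t, v (x u) ⬝ᵥ V (x u) := by
    intro s t hs hst
    have h1 := hkey t (le_trans hs hst)
    have h2 := hkey s hs
    have h3 := intervalIntegral.integral_interval_sub_left
      (hWint 0 t le_rfl (le_trans hs hst)) (hWint 0 s le_rfl hs)
    linarith
  have hmono : ∀ s t : ℝ, 0 ≤ s → s ≤ t → f (x s) ≤ f (x t) := by
    intro s t hs hst
    have h := hdiff s t hs hst
    have hnn : 0 ≤ ∫ u in s..t, v (x u) ⬝ᵥ V (x u) := by
      apply intervalIntegral.integral_nonneg hst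
      intro u hu
      exact W_nonneg hgpd hV (hxX u (le_trans hs hu.1))
    linarith
  refine ⟨hmono, ?_, ?_⟩
  · -- strict increase
    intro t ht hVt t' htt'
    have ht' : (0:ℝ) ≤ t' := le_trans ht (le_of_lt htt')
    have hWt : 0 < v (x t) ⬝ᵥ V (x t) := W_pos hgpd hV (hxX t ht) hVt
    set c : ℝ := (v (x t) ⬝ᵥ V (x t)) / 2 with hc
    have hc0 : 0 < c := by simp only [hc]; linarith
    obtain ⟨O, hOopen, hxtO, hOlt⟩ :=
      W_lower_bound_nhds hgcont hgpd hvcont hV (hxX t ht) (show c < _ by simp only [hc]; linarith)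
    have hmem : x ⁻¹' O ∈ nhdsWithin t (Set.Ici 0) := hxcont t ht (hOopen.mem_nhds hxtO)
    obtain ⟨δ, hδ0, hball⟩ := Metric.mem_nhdsWithin_iff.1 hmem
    set η : ℝ := min (δ / 2) (t' - t) with hη
    have hη0 : 0 < η := lt_min (by linarith) (by linarith)
    have hηδ : η < δ := lt_of_le_of_lt (min_le_left _ _) (by linarith)
    have hηt' : t + η ≤ t' := by
      have := min_le_right (δ / 2) (t' - t)
      simp only [hη]
      linarith
    have hWlow : ∀ u ∈ Set.Icc t (t + η), c ≤ v (x u) ⬝ᵥ V (x u) := by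
      intro u hu
      have hu0 : 0 ≤ u := le_trans ht hu.1
      have hub : u ∈ Metric.ball t δ := by
        rw [Metric.mem_ball, Real.dist_eq, abs_of_nonneg (by linarith [hu.1])]
        linarith [hu.2]
      have hxO : x u ∈ O := hball ⟨hub, hu0⟩
      exact le_of_lt (hOlt (x u) ⟨hxO, hxX u hu0⟩)
    have hint1 : IntervalIntegrable (fun u => v (x u) ⬝ᵥ V (x u)) volume t (t + η) :=
      hWint t (t + η) ht (by linarith)
    have hint2 : IntervalIntegrable (fun u => v (x u) ⬝ᵥ V (x u)) volume (t + η) t' :=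
      hWint (t + η) t' (by linarith) hηt'
    have hlow : c * η ≤ ∫ u in t..(t + η), v (x u) ⬝ᵥ V (x u) := by
      have := intervalIntegral.integral_mono_on (by linarith : t ≤ t + η)
        (intervalIntegrable_const (c := c)) hint1 hWlow
      rw [intervalIntegral.integral_const, smul_eq_mul] at this
      calc c * η = (t + η - t) * c := by ring
        _ ≤ _ := this
    have hnn2 : 0 ≤ ∫ u in (t + η)..t', v (x u) ⬝ᵥ V (x u) := by
      apply intervalIntegral.integral_nonneg hηt'
      intro u hu
      exact W_nonneg hgpd hV (hxX u (le_trans ht (by linarith [hu.1])))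
    have hadd := intervalIntegral.integral_add_adjacent_intervals hint1 hint2
    have hd := hdiff t t' ht (le_of_lt htt')
    have : 0 < f (x t') - f (x t) := by
      rw [hd, ← hadd]
      have : 0 < c * η := mul_pos hc0 hη0
      linarith
    linarith
  · -- convergence to rest points
    set Z : Set (A → ℝ) := {y ∈ stdSimplex ℝ A | V y = 0} with hZ
    obtain ⟨M, hM0, hMle⟩ := exists_M hgcont hgpd hvcont hV
    have hfX : ContinuousOn f (stdSimplex ℝ A) :=
      fun y hy => ((hf' y (hXU hy)).continuousAt).continuousWithinAt
    obtain ⟨ymax, hymax, hmax⟩ :=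
      (isCompact_stdSimplex ℝ A).exists_isMaxOn stdSimplex_nonempty' hfX
    set L : ℝ := f ymax - f (x 0) with hL
    have hIle : ∀ t : ℝ, 0 ≤ t → (∫ s in (0:ℝ)..t, v (x s) ⬝ᵥ V (x s)) ≤ L := by
      intro t ht
      have := hkey t ht
      have h2 : f (x t) ≤ f ymax := hmax (hxX t ht)
      simp only [hL]
      linarith
    by_contra hcon
    rw [Metric.tendsto_atTop] at hcon
    push_neg at hcon
    obtain ⟨ε, hε, hbad⟩ := hcon
    have hbad' : ∀ N : ℝ, ∃ t : ℝ, max N 0 ≤ t ∧ ε ≤ Metric.infDist (x t) Z := by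
      intro N
      obtain ⟨t, htN, hdist⟩ := hbad (max N 0)
      refine ⟨t, htN, ?_⟩
      rwa [Real.dist_0_eq_abs, abs_of_nonneg Metric.infDist_nonneg] at hdist
    set K : Set (A → ℝ) := {y ∈ stdSimplex ℝ A | ε / 2 ≤ Metric.infDist y Z} with hK
    have hKcomp : IsCompact K := by
      have hKeq : K = stdSimplex ℝ A ∩ ((fun y => Metric.infDist y Z) ⁻¹' Set.Ici (ε / 2)) := by
        ext y
        simp [hK, Set.mem_sep_iff, Set.mem_Ici]
      rw [hKeq]
      exact (isCompact_stdSimplex ℝ A).inter_right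
        (isClosed_Ici.preimage (Metric.continuous_infDist_pt Z))
    have hKne : ∀ y ∈ K, V y ≠ 0 := by
      rintro y ⟨hyX, hyd⟩ h0
      have hyZ : y ∈ Z := ⟨hyX, h0⟩
      have := Metric.infDist_zero_of_mem hyZ
      rw [this] at hyd
      linarith
    obtain ⟨c, hc0, hcK⟩ := exists_pos_on_compact hgcont hgpd hvcont hV hKcomp
      (fun y hy => hy.1) hKne
    set δ : ℝ := ε / (2 * M) with hδ
    have hδ0 : 0 < δ := by positivity
    have hMδ : M * δ = ε / 2 := by
      field_simp [hδ]
      rw [hδ]; field_simp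
    have hstay : ∀ t u : ℝ, 0 ≤ t → ε ≤ Metric.infDist (x t) Z → t ≤ u → u ≤ t + δ →
        x u ∈ K := by
      intro t u ht hdist htu huδ
      have hu0 : 0 ≤ u := le_trans ht htu
      refine ⟨hxX u hu0, ?_⟩
      have hl := x_lip hxX hMle hloc hsol ht htu
      have hml : ‖x u - x t‖ ≤ ε / 2 := by
        rw [← hMδ]
        calc ‖x u - x t‖ ≤ M * (u - t) := hl
          _ ≤ M * δ := by
              apply mul_le_mul_of_nonneg_left _ (le_of_lt hM0)
              linarith
      have htri := Metric.infDist_le_infDist_add_dist (s := Z) (x := x t) (y := x u)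
      have hde : dist (x t) (x u) = ‖x u - x t‖ := by
        rw [dist_eq_norm, ← norm_neg]
        congr 1
        abel
      rw [hde] at htri
      linarith
    have hjump : ∀ t : ℝ, 0 ≤ t → ε ≤ Metric.infDist (x t) Z →
        c * δ ≤ ∫ u in t..(t + δ), v (x u) ⬝ᵥ V (x u) := by
      intro t ht hdist
      have hint : IntervalIntegrable (fun u => v (x u) ⬝ᵥ V (x u)) volume t (t + δ) :=
        hWint t (t + δ) ht (by linarith)
      have hWlow : ∀ u ∈ Set.Icc t (t + δ), c ≤ v (x u) ⬝ᵥ V (x u) :=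
        fun u hu => hcK (x u) (hstay t u ht hdist hu.1 hu.2)
      have := intervalIntegral.integral_mono_on (by linarith : t ≤ t + δ)
        (intervalIntegrable_const (c := c)) hint hWlow
      rw [intervalIntegral.integral_const, smul_eq_mul] at this
      calc c * δ = (t + δ - t) * c := by ring
        _ ≤ _ := this
    choose Ψ hΨ₁ hΨ₂ using hbad'
    set σ : ℕ → ℝ := fun k => Nat.rec (Ψ 0) (fun _ p => Ψ (p + δ)) k with hσ
    have hσ0 : σ 0 = Ψ 0 := rfl
    have hσs : ∀ k : ℕ, σ (k + 1) = Ψ (σ k + δ) := fun k => rfl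
    have hσnn : ∀ k : ℕ, 0 ≤ σ k := by
      intro k
      induction k with
      | zero => exact le_trans (le_max_right 0 0) (hΨ₁ 0)
      | succ k ih =>
          rw [hσs k]
          exact le_trans (le_max_right _ 0) (hΨ₁ (σ k + δ))
    have hσbad : ∀ k : ℕ, ε ≤ Metric.infDist (x (σ k)) Z := by
      intro k
      cases k with
      | zero => exact hΨ₂ 0
      | succ k => rw [hσs k]; exact hΨ₂ (σ k + δ)
    have hσgrow : ∀ k : ℕ, σ k + δ ≤ σ (k + 1) := by
      intro k
      rw [hσs k]
      exact le_trans (le_max_left _ _) (hΨ₁ (σ k + δ))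
    have hmain : ∀ k : ℕ, ((k : ℝ) + 1) * (c * δ) ≤
        ∫ u in (0:ℝ)..(σ k + δ), v (x u) ⬝ᵥ V (x u) := by
      intro k
      induction k with
      | zero =>
          have hint1 : IntervalIntegrable (fun u => v (x u) ⬝ᵥ V (x u)) volume 0 (σ 0) :=
            hWint 0 (σ 0) le_rfl (hσnn 0)
          have hint2 : IntervalIntegrable (fun u => v (x u) ⬝ᵥ V (x u)) volume (σ 0) (σ 0 + δ) :=
            hWint (σ 0) (σ 0 + δ) (hσnn 0) (by linarith)
          have hadd := intervalIntegral.integral_add_adjacent_intervals hint1 hint2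
          have hnn : 0 ≤ ∫ u in (0:ℝ)..(σ 0), v (x u) ⬝ᵥ V (x u) := by
            apply intervalIntegral.integral_nonneg (hσnn 0)
            intro u hu
            exact W_nonneg hgpd hV (hxX u hu.1)
          have hj := hjump (σ 0) (hσnn 0) (hσbad 0)
          rw [← hadd]
          push_cast
          linarith
      | succ k ih =>
          have h0k : (0:ℝ) ≤ σ k + δ := by linarith [hσnn k]
          have hint1 : IntervalIntegrable (fun u => v (x u) ⬝ᵥ V (x u)) volume 0 (σ k + δ) :=
            hWint 0 (σ k + δ) le_rfl h0k
          have hint2 : IntervalIntegrable (fun u => v (x u) ⬝ᵥ V (x u)) volume (σ k + δ)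
              (σ (k + 1)) := hWint (σ k + δ) (σ (k + 1)) h0k (hσgrow k)
          have hint3 : IntervalIntegrable (fun u => v (x u) ⬝ᵥ V (x u)) volume (σ (k + 1))
              (σ (k + 1) + δ) := hWint (σ (k + 1)) (σ (k + 1) + δ) (hσnn (k + 1)) (by linarith)
          have hadd1 := intervalIntegral.integral_add_adjacent_intervals hint1 hint2
          have hadd2 := intervalIntegral.integral_add_adjacent_intervals
            (hint1.trans hint2) hint3
          have hnn : 0 ≤ ∫ u in (σ k + δ)..(σ (k + 1)), v (x u) ⬝ᵥ V (x u) := by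
            apply intervalIntegral.integral_nonneg (hσgrow k)
            intro u hu
            exact W_nonneg hgpd hV (hxX u (le_trans h0k hu.1))
          have hj := hjump (σ (k + 1)) (hσnn (k + 1)) (hσbad (k + 1))
          rw [← hadd2, ← hadd1]
          push_cast
          push_cast at ih
          linarith
    obtain ⟨n, hn⟩ := exists_nat_gt (L / (c * δ))
    have hcδ : 0 < c * δ := mul_pos hc0 hδ0
    have h1 := hmain n
    have h2 := hIle (σ n + δ) (by linarith [hσnn n])
    have h3 : L < n * (c * δ) := by
      rw [div_lt_iff₀ hcδ] at hn
      exact hn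
    nlinarith [hcδ]
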